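/- Define g : (−1/2, 1/2) → ℝ by g(κ₂) = (−5 + 30κ₂ + √(25 + 36κ₂ + 228κ₂²)) / (56κ₂) for κ₂ ≠ 0 and g(0) = 3/5. Then g is continuous and strictly increasing on (−1/2, 1/2), and 3/7 < g(κ₂) < 5/7 for every κ₂ ∈ (−1/2, 1/2). Consequently, for fixed positive integer N and κ₁ > 0, the unique critical point ℓ*(κ₂) ∈ (0, π/N) of the near-axis curvature model, characterized by cos²(N ℓ*(κ₂)/2) = g(κ₂), is a strictly decreasing function of κ₂ on (−1/2, 1/2). -/

import Mathlib

open Real Set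

set_option maxHeartbeats 1000000

/-- The function `g(κ₂) = (−5 + 30κ₂ + √(25 + 36κ₂ + 228κ₂²))/(56κ₂)` for
`κ₂ ≠ 0`, `g(0) = 3/5`, is continuous and strictly increasing on (−1/2, 1/2) and takes
values in (3/7, 5/7) there. Consequently, for fixed positive integer `N` and `κ₁ > 0`,
the unique critical point `ℓ*(κ₂) ∈ (0, π/N)` of the near-axis curvature model,
characterized by `cos²(N ℓ*(κ₂)/2) = g(κ₂)`, is strictly decreasing on (−1/2, 1/2). -/
theorem critical_point_location_monotone
    (g : ℝ → ℝ)
    (hg0 : g 0 = 3 / 5)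
    (hg : ∀ x : ℝ, x ≠ 0 →
      g x = (-5 + 30 * x + Real.sqrt (25 + 36 * x + 228 * x ^ 2)) / (56 * x)) :
    ContinuousOn g (Set.Ioo (-(1/2) : ℝ) (1/2)) ∧
    StrictMonoOn g (Set.Ioo (-(1/2) : ℝ) (1/2)) ∧
    (∀ x ∈ Set.Ioo (-(1/2) : ℝ) (1/2), 3 / 7 < g x ∧ g x < 5 / 7) ∧
    (∀ (N : ℕ), 0 < N → ∀ (κ₁ : ℝ), 0 < κ₁ → ∀ (ℓs : ℝ → ℝ),
      (∀ x ∈ Set.Ioo (-(1/2) : ℝ) (1/2),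
        ℓs x ∈ Set.Ioo (0 : ℝ) (π / (N : ℝ)) ∧
        Real.cos ((N : ℝ) * ℓs x / 2) ^ 2 = g x) →
      StrictAntiOn ℓs (Set.Ioo (-(1/2) : ℝ) (1/2))) := by
  have hDpos : ∀ x : ℝ, (0:ℝ) < 25 + 36 * x + 228 * x ^ 2 := by
    intro x; nlinarith [sq_nonneg (38 * x + 3)]
  -- the regularized form of g
  set G : ℝ → ℝ := fun x =>
    6 * (1 - 2 * x) / (Real.sqrt (25 + 36 * x + 228 * x ^ 2) + 5 - 30 * x) with hG
  have hden : ∀ x ∈ Set.Ioo (-(1/2) : ℝ) (1/2),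
      (0:ℝ) < Real.sqrt (25 + 36 * x + 228 * x ^ 2) + 5 - 30 * x := by
    intro x hx
    obtain ⟨hx1, hx2⟩ := hx
    set s := Real.sqrt (25 + 36 * x + 228 * x ^ 2) with hsdef
    have hs : s ^ 2 = 25 + 36 * x + 228 * x ^ 2 := Real.sq_sqrt (hDpos x).le
    have hsnn : 0 ≤ s := Real.sqrt_nonneg _
    by_contra hcon
    push_neg at hcon
    have h1 : s ≤ 30 * x - 5 := by linarith
    have h2 : s * s ≤ (30 * x - 5) * (30 * x - 5) := mul_self_le_mul_self hsnn h1
    nlinarith [hs, hsnn]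
  have heq : ∀ x ∈ Set.Ioo (-(1/2) : ℝ) (1/2), g x = G x := by
    intro x hx
    rcases eq_or_ne x 0 with rfl | hx0
    · have h25 : Real.sqrt (25 + 36 * (0:ℝ) + 228 * (0:ℝ) ^ 2) = 5 := by
        rw [show (25 + 36 * (0:ℝ) + 228 * (0:ℝ) ^ 2) = 5 ^ 2 by norm_num,
          Real.sqrt_sq (by norm_num)]
      simp only [hG, h25]
      rw [hg0]; norm_num
    · set s := Real.sqrt (25 + 36 * x + 228 * x ^ 2) with hsdef
      have hs : s ^ 2 = 25 + 36 * x + 228 * x ^ 2 := Real.sq_sqrt (hDpos x).le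
      have ht : (0:ℝ) < s + 5 - 30 * x := hden x hx
      have hprod : (-5 + 30 * x + s) * (s + 5 - 30 * x) = 6 * (1 - 2 * x) * (56 * x) := by
        linear_combination hs
      rw [hg x hx0, hG]
      rw [div_eq_div_iff (by positivity) ht.ne']
      linear_combination hprod
  have hcontG : ContinuousOn G (Set.Ioo (-(1/2) : ℝ) (1/2)) := by
    apply ContinuousOn.div
    · exact (by continuity : Continuous fun x : ℝ => 6 * (1 - 2 * x)).continuousOn
    · have : Continuous fun x : ℝ => Real.sqrt (25 + 36 * x + 228 * x ^ 2) + 5 - 30 * x :=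
        ((Real.continuous_sqrt.comp (by continuity)).add continuous_const).sub
          (by continuity)
      exact this.continuousOn
    · intro x hx; exact (hden x hx).ne'
  -- key facts at each point: bounds and the algebraic relation
  have key : ∀ x ∈ Set.Ioo (-(1/2) : ℝ) (1/2),
      3 / 7 < g x ∧ g x < 5 / 7 ∧
      x * (28 * (g x) ^ 2 - 30 * (g x) + 6) = 3 - 5 * (g x) := by
    intro x hx
    obtain ⟨hx1, hx2⟩ := hx
    set s := Real.sqrt (25 + 36 * x + 228 * x ^ 2) with hsdef
    have hs : s ^ 2 = 25 + 36 * x + 228 * x ^ 2 := Real.sq_sqrt (hDpos x).le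
    have hsnn : 0 ≤ s := Real.sqrt_nonneg _
    have ht : (0:ℝ) < s + 5 - 30 * x := hden x ⟨hx1, hx2⟩
    have heq' : g x = 6 * (1 - 2 * x) / (s + 5 - 30 * x) := heq x ⟨hx1, hx2⟩
    have hxx : (x + 1/2) * (1/2 - x) > 0 := mul_pos (by linarith) (by linarith)
    have hlb : 3 / 7 < g x := by
      rw [heq', lt_div_iff₀ ht]
      have hs9 : s < 9 + 2 * x := by
        by_contra hcon
        push_neg at hcon
        have h2 : (9 + 2 * x) * (9 + 2 * x) ≤ s * s :=
          mul_self_le_mul_self (by linarith) hcon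
        nlinarith [hs]
      linarith
    have hub : g x < 5 / 7 := by
      rw [heq', div_lt_iff₀ ht]
      have hs17 : 17 + 66 * x < 5 * s := by
        by_contra hcon
        push_neg at hcon
        have hpos17 : 0 ≤ 17 + 66 * x := by linarith
        have h2 : (5 * s) * (5 * s) ≤ (17 + 66 * x) * (17 + 66 * x) :=
          mul_self_le_mul_self (by positivity) hcon
        have h3 : 336 * (1 - 2 * x) ^ 2 ≤ 0 := by nlinarith [hs, h2]
        have h1x : (0:ℝ) < 1 - 2 * x := by linarith
        nlinarith [mul_pos h1x h1x, h3]
      linarith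
    refine ⟨hlb, hub, ?_⟩
    have e1 : g x * (s + 5 - 30 * x) = 6 * (1 - 2 * x) := by
      rw [heq']; exact div_mul_cancel₀ _ ht.ne'
    have hA : g x * s = 6 - 12 * x - 5 * (g x) + 30 * (g x) * x := by
      linear_combination e1
    have hA2 : (g x) ^ 2 * (25 + 36 * x + 228 * x ^ 2)
        = (6 - 12 * x - 5 * (g x) + 30 * (g x) * x) ^ 2 := by
      linear_combination (g x * s + (6 - 12 * x - 5 * (g x) + 30 * (g x) * x)) * hA
        - (g x) ^ 2 * hs
    have h3 : 12 * (1 - 2 * x) *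
        (x * (28 * (g x) ^ 2 - 30 * (g x) + 6) - (3 - 5 * (g x))) = 0 := by
      linear_combination hA2
    have h12 : (0:ℝ) < 12 * (1 - 2 * x) := by linarith
    rcases mul_eq_zero.mp h3 with h | h
    · exact absurd h h12.ne'
    · linarith
  have hmono : StrictMonoOn g (Set.Ioo (-(1/2) : ℝ) (1/2)) := by
    intro a ha b hb hab
    obtain ⟨ha1, ha2, hra⟩ := key a ha
    obtain ⟨hb1, hb2, hrb⟩ := key b hb
    by_contra hcon
    push_neg at hcon
    have hDa : 28 * (g a) ^ 2 - 30 * (g a) + 6 < 0 := by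
      nlinarith [mul_pos (show (0:ℝ) < g a - 3/7 by linarith)
        (show (0:ℝ) < 5/7 - g a by linarith)]
    have hDb : 28 * (g b) ^ 2 - 30 * (g b) + 6 < 0 := by
      nlinarith [mul_pos (show (0:ℝ) < g b - 3/7 by linarith)
        (show (0:ℝ) < 5/7 - g b by linarith)]
    have hψ : 84 * (g a + g b) - 60 - 140 * (g a) * (g b) < 0 := by
      nlinarith [mul_pos (show (0:ℝ) < 5/7 - g a by linarith)
          (show (0:ℝ) < 1 - g b by linarith),
        mul_pos (show (0:ℝ) < g a - 3/7 by linarith)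
          (show (0:ℝ) < g b by linarith)]
    have hid : (b - a) * ((28 * (g a) ^ 2 - 30 * (g a) + 6) *
          (28 * (g b) ^ 2 - 30 * (g b) + 6))
        = (g a - g b) * (84 * (g a + g b) - 60 - 140 * (g a) * (g b)) := by
      linear_combination (28 * (g a) ^ 2 - 30 * (g a) + 6) * hrb
        - (28 * (g b) ^ 2 - 30 * (g b) + 6) * hra
    have h1 : 0 < (b - a) * ((28 * (g a) ^ 2 - 30 * (g a) + 6) *
        (28 * (g b) ^ 2 - 30 * (g b) + 6)) :=
      mul_pos (by linarith) (mul_pos_of_neg_of_neg hDa hDb)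
    have h2 : (g a - g b) * (84 * (g a + g b) - 60 - 140 * (g a) * (g b)) ≤ 0 :=
      mul_nonpos_of_nonneg_of_nonpos (by linarith) (by linarith)
    linarith [hid ▸ h1]
  refine ⟨hcontG.congr heq, hmono, fun x hx => ⟨(key x hx).1, (key x hx).2.1⟩, ?_⟩
  intro N hN κ₁ hκ₁ ℓs hℓ a ha b hb hab
  obtain ⟨hla, hga⟩ := hℓ a ha
  obtain ⟨hlb, hgb⟩ := hℓ b hb
  have hNpos : (0:ℝ) < (N:ℝ) := by exact_mod_cast hN
  have hgab : g a < g b := hmono ha hb hab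
  rw [← hga, ← hgb] at hgab
  have hπ := Real.pi_pos
  have hau : (N:ℝ) * ℓs a / 2 ∈ Set.Icc 0 π := by
    constructor
    · nlinarith [mul_pos hNpos hla.1]
    · have := (lt_div_iff₀ hNpos).mp hla.2
      nlinarith [mul_pos hNpos hla.1]
  have hbu : (N:ℝ) * ℓs b / 2 ∈ Set.Icc 0 π := by
    constructor
    · nlinarith [mul_pos hNpos hlb.1]
    · have := (lt_div_iff₀ hNpos).mp hlb.2
      nlinarith [mul_pos hNpos hlb.1]
  have hcu : 0 ≤ Real.cos ((N:ℝ) * ℓs a / 2) := by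
    apply Real.cos_nonneg_of_mem_Icc
    constructor
    · have := hau.1; linarith
    · have := (lt_div_iff₀ hNpos).mp hla.2; linarith
  have hcv : 0 ≤ Real.cos ((N:ℝ) * ℓs b / 2) := by
    apply Real.cos_nonneg_of_mem_Icc
    constructor
    · have := hbu.1; linarith
    · have := (lt_div_iff₀ hNpos).mp hlb.2; linarith
  have hcuv : Real.cos ((N:ℝ) * ℓs a / 2) < Real.cos ((N:ℝ) * ℓs b / 2) :=
    lt_of_pow_lt_pow_left₀ 2 hcv hgab
  have hvu : (N:ℝ) * ℓs b / 2 < (N:ℝ) * ℓs a / 2 :=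
    (Real.strictAntiOn_cos.lt_iff_gt hau hbu).mp hcuv
  have : (N:ℝ) * ℓs b < (N:ℝ) * ℓs a := by linarith
  exact lt_of_mul_lt_mul_left this hNpos.le
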